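/- arXiv:2312.14379 — 4 statements merged into one kernel-verified Lean document; each statement's English description precedes it below -/
import Mathlib

section
/- Let (T, n) be a Noetherian local ring, x = x₁, ..., x_ℓ a regular sequence on T, and a = a₁, ..., a_ℓ a sequence of elements of T. Let ∂₁^K : T^ℓ → T and ∂₁^L : T^ℓ → T be the first Koszul differentials sending the i-th basis vector to x_i and a_i respectively. Then ∂₁^L(Ker ∂₁^K) equals the ideal I₂ of T generated by all 2×2 minors a_i x_j − a_j x_i of the 2×ℓ matrix with rows (a₁,...,a_ℓ) and (x₁,...,x_ℓ). -/
open Finset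

/-- The syzygy lemma: if each `x k` is regular modulo the ideal of earlier `x i`'s,
then any relation `∑ c i * x i = 0` sends `a` into the ideal of 2×2 minors. -/
lemma koszul_syzygy_aux {T : Type*} [CommRing T] :
    ∀ (ℓ : ℕ) (x : Fin ℓ → T),
      (∀ (k : Fin ℓ) (c : T),
        c * x k ∈ Ideal.span {z | ∃ i : Fin ℓ, i < k ∧ z = x i} →
          c ∈ Ideal.span {z | ∃ i : Fin ℓ, i < k ∧ z = x i}) →
      ∀ (c a : Fin ℓ → T), (∑ i, c i * x i = 0) →
        ∑ i, c i * a i ∈ Ideal.span {z | ∃ i j : Fin ℓ, z = a i * x j - a j * x i} := by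
  intro ℓ
  induction ℓ with
  | zero => intro x H c a h; simp
  | succ ℓ ih =>
    intro x H c a hc
    -- last coefficient lies in the ideal of the previous x's
    have hset : {z | ∃ i : Fin (ℓ+1), i < Fin.last ℓ ∧ z = x i}
        = Set.range (fun j : Fin ℓ => x j.castSucc) := by
      ext z
      constructor
      · rintro ⟨i, hi, rfl⟩
        rcases Fin.eq_castSucc_of_ne_last (Fin.ne_last_of_lt hi) with ⟨j, rfl⟩
        exact ⟨j, rfl⟩
      · rintro ⟨j, rfl⟩
        exact ⟨j.castSucc, j.castSucc_lt_last, rfl⟩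
    have hsum : c (Fin.last ℓ) * x (Fin.last ℓ)
        = - ∑ j : Fin ℓ, c j.castSucc * x j.castSucc := by
      rw [Fin.sum_univ_castSucc] at hc
      linear_combination hc
    have hmem : c (Fin.last ℓ) * x (Fin.last ℓ)
        ∈ Ideal.span {z | ∃ i : Fin (ℓ+1), i < Fin.last ℓ ∧ z = x i} := by
      rw [hset, hsum]
      exact neg_mem (Ideal.sum_mem _ fun j _ =>
        Ideal.mul_mem_left _ _ (Ideal.subset_span ⟨j, rfl⟩))
    have hd0 := H (Fin.last ℓ) _ hmem
    rw [hset] at hd0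
    obtain ⟨d, hd⟩ := (Submodule.mem_span_range_iff_exists_fun T).mp hd0
    simp only [smul_eq_mul] at hd
    -- the corrected relation on the first ℓ terms
    set c' : Fin ℓ → T := fun j => c j.castSucc + d j * x (Fin.last ℓ) with hc'
    have hrel : ∑ j : Fin ℓ, c' j * x j.castSucc = 0 := by
      have : ∑ j : Fin ℓ, c' j * x j.castSucc
          = (∑ j : Fin ℓ, c j.castSucc * x j.castSucc)
            + x (Fin.last ℓ) * ∑ j : Fin ℓ, d j * x j.castSucc := by
        rw [Finset.mul_sum, ← Finset.sum_add_distrib]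
        exact Finset.sum_congr rfl fun j _ => by ring
      rw [this, hd]
      rw [Fin.sum_univ_castSucc] at hc
      linear_combination hc
    -- hypothesis transfer to the prefix
    have H' : ∀ (k : Fin ℓ) (e : T),
        e * x k.castSucc ∈ Ideal.span {z | ∃ i : Fin ℓ, i < k ∧ z = x i.castSucc} →
          e ∈ Ideal.span {z | ∃ i : Fin ℓ, i < k ∧ z = x i.castSucc} := by
      intro k e he
      have hseteq : {z | ∃ i : Fin ℓ, i < k ∧ z = x i.castSucc}
          = {z | ∃ i : Fin (ℓ+1), i < k.castSucc ∧ z = x i} := by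
        ext z
        constructor
        · rintro ⟨i, hi, rfl⟩
          exact ⟨i.castSucc, by simpa using hi, rfl⟩
        · rintro ⟨i, hi, rfl⟩
          rcases Fin.eq_castSucc_of_ne_last (Fin.ne_last_of_lt
            (lt_of_lt_of_le hi k.castSucc_lt_last.le)) with ⟨j, rfl⟩
          exact ⟨j, by simpa using hi, rfl⟩
      rw [hseteq] at he ⊢
      exact H k.castSucc e he
    have hih := ih (fun j => x j.castSucc) H' c' (fun j => a j.castSucc) hrel
    -- assemble
    have hmono : Ideal.span {z | ∃ i j : Fin ℓ, z = a i.castSucc * x j.castSucc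
          - a j.castSucc * x i.castSucc}
        ≤ Ideal.span {z | ∃ i j : Fin (ℓ+1), z = a i * x j - a j * x i} :=
      Ideal.span_mono (by rintro z ⟨i, j, rfl⟩; exact ⟨i.castSucc, j.castSucc, rfl⟩)
    have key : ∑ i, c i * a i
        = (∑ j : Fin ℓ, c' j * a j.castSucc)
          + ∑ j : Fin ℓ, d j * (a (Fin.last ℓ) * x j.castSucc
              - a j.castSucc * x (Fin.last ℓ)) := by
      rw [Fin.sum_univ_castSucc]
      have : c (Fin.last ℓ) * a (Fin.last ℓ)
          = (∑ j : Fin ℓ, d j * x j.castSucc) * a (Fin.last ℓ) := by rw [hd]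
      rw [this, ← Finset.sum_add_distrib, Finset.sum_mul, ← Finset.sum_add_distrib]
      exact Finset.sum_congr rfl fun j _ => by simp only [hc']; ring
    rw [key]
    refine add_mem (hmono hih) (Ideal.sum_mem _ fun j _ =>
      Ideal.mul_mem_left _ _ (Ideal.subset_span ⟨Fin.last ℓ, j.castSucc, rfl⟩))

/-- For a regular sequence `x₁,…,x_ℓ` on a Noetherian local ring `T` and any sequence
`a₁,…,a_ℓ`, the image under the Koszul differential `e_i ↦ a_i` of the kernel of the
Koszul differential `e_i ↦ x_i` is the ideal of 2×2 minors `I₂` of the matrix with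
rows `(a₁,…,a_ℓ)` and `(x₁,…,x_ℓ)`. -/
theorem koszul_kernel_image_eq_minors
    (T : Type*) [CommRing T] [IsNoetherianRing T] [IsLocalRing T]
    (ℓ : ℕ) (x a : Fin ℓ → T)
    (hreg : RingTheory.Sequence.IsRegular T (List.ofFn x)) :
    ∀ y : T,
      (∃ c : Fin ℓ → T, (∑ i, c i * x i = 0) ∧ y = ∑ i, c i * a i) ↔
        y ∈ Ideal.span { z | ∃ i j : Fin ℓ, z = a i * x j - a j * x i } := by
  intro y
  constructor
  · rintro ⟨c, hc, rfl⟩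
    apply koszul_syzygy_aux ℓ x _ c a hc
    -- regularity hypothesis
    intro k e he
    have hk : (k : ℕ) < (List.ofFn x).length := by simp
    have hreg' := hreg.toIsWeaklyRegular.regular_mod_prev k hk
    have hNeq : (Ideal.ofList ((List.ofFn x).take k) • ⊤ : Submodule T T)
        = Ideal.span {z | ∃ i : Fin ℓ, i < k ∧ z = x i} := by
      rw [Ideal.smul_eq_mul, Ideal.mul_top]
      refine congrArg Ideal.span ?_
      ext z
      simp only [List.mem_take_iff_getElem, Set.mem_setOf_eq, List.getElem_ofFn,
        List.length_ofFn]
      constructor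
      · rintro ⟨i, hi, rfl⟩
        exact ⟨⟨i, by omega⟩, by rw [Fin.lt_def]; exact (by omega : i < (k:ℕ)), rfl⟩
      · rintro ⟨i, hi, rfl⟩
        rw [Fin.lt_def] at hi
        exact ⟨i, by omega, by simp⟩
    have hx : (List.ofFn x)[(k : ℕ)] = x k := by simp
    rw [hx] at hreg'
    have := mem_of_isSMulRegular_quotient_of_smul_mem hreg'
      (x := e) (by rw [hNeq, smul_eq_mul, mul_comm]; exact he)
    rwa [hNeq] at this
  · intro hy
    -- the set of such y is an ideal containing all minors
    let f : (Fin ℓ → T) →ₗ[T] T := Fintype.linearCombination T x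
    let g : (Fin ℓ → T) →ₗ[T] T := Fintype.linearCombination T a
    have hmem : y ∈ Submodule.map g (LinearMap.ker f) := by
      refine Ideal.span_le.mpr ?_ hy
      rintro z ⟨i, j, rfl⟩
      refine ⟨Pi.single i (x j) - Pi.single j (x i), ?_, ?_⟩
      · simp only [LinearMap.mem_ker, map_sub, f, Fintype.linearCombination_apply]
        simp [Pi.single_apply, Finset.sum_sub_distrib, ite_mul,
          Finset.sum_ite_eq', mul_comm]
      · simp only [map_sub, g, Fintype.linearCombination_apply]
        simp [Pi.single_apply, Finset.sum_sub_distrib, ite_mul,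
          Finset.sum_ite_eq', mul_comm]
    obtain ⟨c, hcf, hcg⟩ := hmem
    exact ⟨c, by simpa [f, Fintype.linearCombination_apply, smul_eq_mul]
        using hcf,
      by simpa [g, Fintype.linearCombination_apply, smul_eq_mul, eq_comm]
        using hcg.symm⟩
end

section
/- Let (R, m) be a one-dimensional Cohen-Macaulay local ring with a fractional canonical ideal K (an R-submodule of Q(R) with R ⊆ K ⊆ \bar{R} and K ≅ K_R). Suppose r(R) = 2 and write K = R + Rf. Then K² = K³ if and only if K/R ≅ R/𝔠 as R-modules, where 𝔠 = R : R[K]. -/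
open IsLocalRing

/-- The length of a module, as the Krull dimension of its submodule lattice. -/
noncomputable def moduleLength (R M : Type*) [Ring R] [AddCommGroup M] [Module R M] : ℕ∞ :=
  WithBot.unbotD 0 (Order.krullDim (Submodule R M))

/-- `K` is a fractional canonical ideal of `R` (inside a total quotient ring `Q`):
`R ⊆ K ⊆ \bar R` and `K ≅ K_R`, the latter expressed through the Herzog–Kunz
double-annihilator characterization of canonical fractional ideals. -/
def IsFracCanonical (R Q : Type*) [CommRing R] [CommRing Q] [Algebra R Q]
    (K : Submodule R Q) : Prop :=
  K.FG ∧ (1 : Submodule R Q) ≤ K ∧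
    K ≤ Subalgebra.toSubmodule (integralClosure R Q) ∧
    ∀ F : Submodule R Q, F.FG → (1 : Submodule R Q) ≤ F → K / (K / F) = F

/-- The conductor ideal `𝔠 = R : R[K]` of `R`. -/
noncomputable def condIdeal (R Q : Type*) [CommRing R] [CommRing Q] [Algebra R Q]
    (K : Submodule R Q) : Ideal R :=
  Submodule.comap (Algebra.linearMap R Q)
    ((1 : Submodule R Q) / (Subalgebra.toSubmodule (Algebra.adjoin R (K : Set Q))))

section Aux
variable {R Q : Type*} [CommRing R] [CommRing Q] [Algebra R Q]

lemma aux_one_fg : (1 : Submodule R Q).FG :=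
  ⟨{1}, by rw [Finset.coe_singleton, ← Submodule.one_eq_span]⟩

lemma aux_div_one (K : Submodule R Q) : K / 1 = K := by
  apply le_antisymm
  · intro x hx
    simpa using hx 1 (Submodule.one_le.mp le_rfl)
  · intro x hx y hy
    obtain ⟨r, rfl⟩ := hy
    have : x * (LinearMap.toSpanSingleton R Q 1) r = r • x := by
      simp [LinearMap.toSpanSingleton_apply, mul_smul_comm]
    rw [this]
    exact Submodule.smul_mem _ _ hx

lemma aux_one_div (K : Submodule R Q) (hKK : K / K = 1) (A : Submodule R Q) :
    1 / A = K / (K * A) := by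
  ext x
  simp only [Submodule.mem_div_iff_forall_mul_mem]
  constructor
  · intro h y hy
    refine Submodule.mul_induction_on hy (fun k hk a ha => ?_) (fun u v hu hv => ?_)
    · obtain ⟨r, hr⟩ := h a ha
      have hr' : r • (1:Q) = x * a := by simpa [LinearMap.toSpanSingleton_apply] using hr
      have : x * (k * a) = r • k := by
        calc x * (k * a) = (x * a) * k := by ring
          _ = (r • (1:Q)) * k := by rw [hr']
          _ = r • k := by rw [smul_mul_assoc, one_mul]
      rw [this]
      exact Submodule.smul_mem _ _ hk
    · rw [mul_add]; exact Submodule.add_mem _ hu hv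
  · intro h a ha
    rw [← hKK]
    intro k hk
    have : x * a * k = x * (k * a) := by ring
    rw [this]
    exact h _ (Submodule.mul_mem_mul hk ha)

lemma aux_pow_fg (K : Submodule R Q) (hK : K.FG) (n : ℕ) : (K ^ n).FG := by
  induction n with
  | zero => simpa using aux_one_fg
  | succ n ih => rw [pow_succ]; exact Submodule.FG.mul ih hK

lemma aux_one_le_pow (K : Submodule R Q) (h1 : (1 : Submodule R Q) ≤ K) (n : ℕ) :
    (1 : Submodule R Q) ≤ K ^ n := by
  induction n with
  | zero => simp
  | succ n ih =>
      rw [pow_succ]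
      calc (1 : Submodule R Q) = 1 * 1 := (one_mul 1).symm
        _ ≤ K ^ n * K := mul_le_mul' ih h1

lemma aux_pow_le_pow (K : Submodule R Q) (h1 : (1 : Submodule R Q) ≤ K) {m n : ℕ}
    (h : m ≤ n) : K ^ m ≤ K ^ n := by
  induction n with
  | zero => simp [Nat.le_zero.mp h]
  | succ n ih =>
      rcases Nat.lt_or_ge m (n+1) with h' | h'
      · calc K ^ m ≤ K ^ n := ih (Nat.lt_succ_iff.mp h')
          _ = K ^ n * 1 := (mul_one _).symm
          _ ≤ K ^ n * K := mul_le_mul' le_rfl h1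
          _ = K ^ (n+1) := (pow_succ K n).symm
      · have : m = n + 1 := le_antisymm h h'
        rw [this]

lemma aux_comap_inj (S T : Submodule R Q) (hS : S ≤ 1) (hT : T ≤ 1)
    (h : Submodule.comap (Algebra.linearMap R Q) S =
      Submodule.comap (Algebra.linearMap R Q) T) : S = T := by
  have hmap : ∀ U : Submodule R Q, U ≤ 1 →
      Submodule.map (Algebra.linearMap R Q)
        (Submodule.comap (Algebra.linearMap R Q) U) = U := by
    intro U hU
    rw [Submodule.map_comap_eq, ← Submodule.one_eq_range, inf_eq_right.mpr hU]
  rw [← hmap S hS, ← hmap T hT, h]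

lemma aux_quot_equiv (K : Submodule R Q) (f : Q)
    (hgen : K = (1 : Submodule R Q) ⊔ Submodule.span R {f}) :
    Nonempty ((↥K ⧸ Submodule.comap K.subtype (1 : Submodule R Q)) ≃ₗ[R]
      (R ⧸ Submodule.comap (Algebra.linearMap R Q) ((1 : Submodule R Q) / K))) := by
  have hfK : f ∈ K := by
    rw [hgen]; exact Submodule.mem_sup_right (Submodule.mem_span_singleton_self f)
  set g : R →ₗ[R] ↥K ⧸ Submodule.comap K.subtype (1 : Submodule R Q) :=
    (Submodule.mkQ _).comp (LinearMap.toSpanSingleton R ↥K ⟨f, hfK⟩) with hg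
  have hsurj : Function.Surjective g := by
    intro q
    obtain ⟨k, rfl⟩ := Submodule.mkQ_surjective _ q
    have hk : (k : Q) ∈ (1 : Submodule R Q) ⊔ Submodule.span R {f} := by
      rw [← hgen]; exact k.2
    obtain ⟨u, hu, v, hv, huv⟩ := Submodule.mem_sup.mp hk
    obtain ⟨a, rfl⟩ := Submodule.mem_span_singleton.mp hv
    refine ⟨a, ?_⟩
    have hga : g a = Submodule.Quotient.mk (a • (⟨f, hfK⟩ : ↥K)) := rfl
    rw [hga, Submodule.mkQ_apply, Submodule.Quotient.eq]
    refine Submodule.mem_comap.mpr ?_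
    have : K.subtype (a • (⟨f, hfK⟩ : ↥K) - k) = -u := by
      simp only [map_sub, Submodule.subtype_apply, Submodule.coe_smul]
      rw [← huv]; ring_nf
    rw [this]
    exact Submodule.neg_mem _ hu
  have hker : LinearMap.ker g =
      Submodule.comap (Algebra.linearMap R Q) ((1 : Submodule R Q) / K) := by
    ext a
    have hmem : a ∈ LinearMap.ker g ↔ a • f ∈ (1 : Submodule R Q) := by
      simp only [hg, LinearMap.mem_ker, LinearMap.comp_apply,
        LinearMap.toSpanSingleton_apply, Submodule.mkQ_apply,
        Submodule.Quotient.mk_eq_zero, Submodule.mem_comap, Submodule.subtype_apply,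
        Submodule.coe_smul]
    rw [hmem, Submodule.mem_comap]
    constructor
    · intro h
      intro y hy
      rw [hgen] at hy
      obtain ⟨u, hu, v, hv, rfl⟩ := Submodule.mem_sup.mp hy
      obtain ⟨b, rfl⟩ := Submodule.mem_span_singleton.mp hv
      have h1 : (Algebra.linearMap R Q) a * u ∈ (1 : Submodule R Q) := by
        have := Submodule.mul_mem_mul (Submodule.algebraMap_mem (A := Q) a) hu
        rwa [one_mul] at this
      have h2 : (Algebra.linearMap R Q) a * (b • f) ∈ (1 : Submodule R Q) := by
        have e : (Algebra.linearMap R Q) a * (b • f) = b • (a • f) := by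
          simp only [Algebra.linearMap_apply, Algebra.smul_def]
          ring
        rw [e]
        exact Submodule.smul_mem _ _ h
      simpa [mul_add] using Submodule.add_mem _ h1 h2
    · intro h
      have := h f hfK
      have e : (Algebra.linearMap R Q) a * f = a • f := by
        simp [Algebra.linearMap_apply, Algebra.smul_def]
      rwa [e] at this
  exact ⟨(g.quotKerEquivOfSurjective hsurj).symm.trans
    (Submodule.quotEquivOfEq _ _ hker)⟩

end Aux

set_option maxHeartbeats 1000000 in
/-- Let `(R,m)` be a one-dimensional Cohen–Macaulay local ring with fractional canonical
ideal `K` of Cohen–Macaulay type `2`, written `K = R + Rf`.  Then `K² = K³` iff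
`K/R ≅ R/𝔠` where `𝔠 = R : R[K]`. -/
theorem type_two_square_eq_cube_iff
    (R : Type*) [CommRing R] [IsNoetherianRing R] [IsLocalRing R]
    (hdim : ringKrullDim R = 1)
    (hCM : ∃ x ∈ maximalIdeal R, x ∈ nonZeroDivisors R)
    (K : Submodule R (FractionRing R)) (hK : IsFracCanonical R (FractionRing R) K)
    (f : FractionRing R)
    (hgen : K = (1 : Submodule R (FractionRing R)) ⊔ Submodule.span R {f})
    (hf : f ∉ (1 : Submodule R (FractionRing R))) :
    K ^ 2 = K ^ 3 ↔
      Nonempty ((↥K ⧸ Submodule.comap K.subtype (1 : Submodule R (FractionRing R)))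
        ≃ₗ[R] (R ⧸ condIdeal R (FractionRing R) K)) := by
  obtain ⟨hKfg, h1K, hKint, hdual⟩ := hK
  have hfK : f ∈ K := by
    rw [hgen]; exact Submodule.mem_sup_right (Submodule.mem_span_singleton_self f)
  have hKK : K / K = 1 := by
    have h := hdual 1 aux_one_fg le_rfl
    rwa [aux_div_one] at h
  have hdivle : ∀ A : Submodule R (FractionRing R), (1 : Submodule R (FractionRing R)) ≤ A →
      1 / A ≤ 1 := by
    intro A hA x hx
    simpa using hx 1 (Submodule.one_le.mp hA)
  have hfint : IsIntegral R f := hKint hfK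
  have hBf : Algebra.adjoin R (K : Set (FractionRing R)) = Algebra.adjoin R {f} := by
    apply le_antisymm
    · rw [Algebra.adjoin_le_iff]
      have hle : K ≤ Subalgebra.toSubmodule (Algebra.adjoin R {f}) := by
        rw [hgen]
        apply sup_le
        · exact Submodule.one_le.mpr (Subalgebra.one_mem _)
        · rw [Submodule.span_le, Set.singleton_subset_iff]
          exact Algebra.self_mem_adjoin_singleton R f
      exact fun x hx => hle hx
    · rw [Algebra.adjoin_le_iff, Set.singleton_subset_iff]
      exact Algebra.subset_adjoin hfK
  set Bm : Submodule R (FractionRing R) :=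
    Subalgebra.toSubmodule (Algebra.adjoin R (K : Set (FractionRing R))) with hBm
  have hBfg : Bm.FG := by
    rw [hBm, hBf]
    exact fg_adjoin_of_finite (Set.finite_singleton f)
      (fun x hx => by rw [Set.mem_singleton_iff] at hx; exact hx ▸ hfint)
  have hKB : ∀ n, K ^ n ≤ Bm := by
    intro n
    induction n with
    | zero =>
        simpa using Submodule.one_le.mpr (Subalgebra.one_mem _)
    | succ n ih =>
        rw [pow_succ]
        refine Submodule.mul_le.mpr fun x hx y hy => ?_
        exact Subalgebra.mul_mem _ (ih hx) (Algebra.subset_adjoin hy)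
  have hNoeth : IsNoetherian R ↥Bm := isNoetherian_of_fg_of_noetherian _ hBfg
  obtain ⟨n0, hn0⟩ := monotone_stabilizes_iff_noetherian.mpr hNoeth
    ⟨fun n => Submodule.comap Bm.subtype (K ^ (n+1)),
     fun a b hab => Submodule.comap_mono (aux_pow_le_pow K h1K (Nat.add_le_add_right hab 1))⟩
  have hstab : ∀ m, n0 + 1 ≤ m → K ^ m = K ^ (n0+1) := by
    intro m hm
    have h := hn0 (m - 1) (by omega)
    have e : m - 1 + 1 = m := by omega
    change Submodule.comap Bm.subtype (K ^ (n0+1)) =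
      Submodule.comap Bm.subtype (K ^ (m - 1 + 1)) at h
    rw [e] at h
    have h2 := congrArg (Submodule.map Bm.subtype) h
    rw [Submodule.map_comap_subtype, Submodule.map_comap_subtype,
      inf_eq_right.mpr (hKB (n0+1)), inf_eq_right.mpr (hKB m)] at h2
    exact h2.symm
  set N : ℕ := n0 + 2 with hN
  have hBK : Bm = K ^ N := by
    apply le_antisymm
    · intro x hx
      rw [hBm, hBf, Subalgebra.mem_toSubmodule,
        Algebra.adjoin_singleton_eq_range_aeval, AlgHom.mem_range] at hx
      obtain ⟨p, rfl⟩ := hx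
      rw [Polynomial.aeval_eq_sum_range]
      refine Submodule.sum_mem _ fun i _ => Submodule.smul_mem _ _ ?_
      have hfi : f ^ i ∈ K ^ i := Submodule.pow_mem_pow K hfK i
      rcases le_or_gt i N with h | h
      · exact aux_pow_le_pow K h1K h hfi
      · rw [hstab i (by omega)] at hfi
        rw [hstab N (by omega)]
        exact hfi
    · exact hKB N
  have key : K ^ 2 = K ^ 3 ↔
      (1 : Submodule R (FractionRing R)) / K = 1 / (K ^ N) := by
    constructor
    · intro h2
      have hpow : ∀ m, 2 ≤ m → K ^ m = K ^ 2 := by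
        intro m hm
        induction m with
        | zero => omega
        | succ m ih =>
            rcases Nat.lt_or_ge m 2 with h | h
            · have : m = 1 := by omega
              subst this; rfl
            · calc K ^ (m+1) = K ^ m * K := pow_succ K m
                _ = K ^ 2 * K := by rw [ih h]
                _ = K ^ 3 := (pow_succ K 2).symm
                _ = K ^ 2 := h2.symm
      rw [aux_one_div K hKK K, aux_one_div K hKK (K ^ N)]
      have e1 : K * K = K ^ 2 := (pow_two K).symm
      have e2 : K * K ^ N = K ^ (N+1) := by rw [mul_comm, ← pow_succ]
      rw [e1, e2, hpow (N+1) (by omega)]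
    · intro h
      have e1 : (1 : Submodule R (FractionRing R)) / K = K / K ^ 2 := by
        rw [aux_one_div K hKK K, pow_two]
      have e2 : (1 : Submodule R (FractionRing R)) / (K ^ N) = K / K ^ (N+1) := by
        rw [aux_one_div K hKK (K ^ N), mul_comm, ← pow_succ]
      have h23 : K / K ^ 2 = K / K ^ (N+1) := by rw [← e1, ← e2, h]
      have hd2 := hdual (K ^ 2) (aux_pow_fg K hKfg 2) (aux_one_le_pow K h1K 2)
      have hdN := hdual (K ^ (N+1)) (aux_pow_fg K hKfg (N+1)) (aux_one_le_pow K h1K (N+1))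
      have h2N : K ^ 2 = K ^ (N+1) := by rw [← hd2, ← hdN, h23]
      have hN12 : K ^ (N+1) = K ^ (N+2) := by
        rw [hstab (N+1) (by omega), hstab (N+2) (by omega)]
      calc K ^ 2 = K ^ (N+1) := h2N
        _ = K ^ (N+2) := hN12
        _ = K ^ (N+1) * K := pow_succ K (N+1)
        _ = K ^ 2 * K := by rw [← h2N]
        _ = K ^ 3 := (pow_succ K 2).symm
  rw [key]
  constructor
  · intro hdiv
    have hc : condIdeal R (FractionRing R) K =
        Submodule.comap (Algebra.linearMap R (FractionRing R))
          ((1 : Submodule R (FractionRing R)) / K) := by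
      unfold condIdeal
      rw [← hBm, hBK, ← hdiv]
    rw [hc]
    exact aux_quot_equiv K f hgen
  · rintro ⟨e⟩
    obtain ⟨e'⟩ := aux_quot_equiv K f hgen
    have hann := (e'.symm.trans e).annihilator_eq
    rw [Ideal.annihilator_quotient, Ideal.annihilator_quotient] at hann
    have hc : condIdeal R (FractionRing R) K =
        Submodule.comap (Algebra.linearMap R (FractionRing R))
          ((1 : Submodule R (FractionRing R)) / (K ^ N)) := by
      unfold condIdeal
      rw [← hBm, hBK]
    rw [hc] at hann
    exact aux_comap_inj _ _ (hdivle K h1K) (hdivle _ (aux_one_le_pow K h1K N)) hann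
end

section
/- With (R, m) a one-dimensional Cohen-Macaulay local ring having a canonical ideal I with principal reduction, fractional canonical ideal K, and 𝔠 = R:R[K]: suppose n ≥ 2, R is n-Goto, and v(R/𝔠) = 1. Then r(R) + n ≤ e₁(I) ≤ n·r(R), where e₁(I) is the first Hilbert coefficient of I. -/
open IsLocalRing

section LengthLemmas

variable {R M N : Type*} [Ring R] [AddCommGroup M] [Module R M] [AddCommGroup N] [Module R N]

lemma moduleLength_eq_iSup :
    moduleLength R M = ⨆ p : LTSeries (Submodule R M), (p.length : ℕ∞) := by
  have : Nonempty (Submodule R M) := ⟨⊥⟩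
  rw [moduleLength, Order.krullDim_eq_iSup_length, WithBot.unbotD_coe]

lemma length_le_of_injective (f : M →ₗ[R] N) (hf : Function.Injective f) :
    moduleLength R M ≤ moduleLength R N := by
  rw [moduleLength_eq_iSup, moduleLength_eq_iSup]
  refine iSup_le fun p => ?_
  have hm : StrictMono (Submodule.map f) :=
    Monotone.strictMono_of_injective (fun _ _ h => Submodule.map_mono h)
      (Submodule.map_injective_of_injective hf)
  exact le_iSup_of_le (p.map _ hm) (by simp)

lemma length_le_of_surjective (f : M →ₗ[R] N) (hf : Function.Surjective f) :
    moduleLength R N ≤ moduleLength R M := by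
  rw [moduleLength_eq_iSup, moduleLength_eq_iSup]
  refine iSup_le fun p => ?_
  have hm : StrictMono (Submodule.comap f) :=
    Monotone.strictMono_of_injective (fun _ _ h => Submodule.comap_mono h)
      (Submodule.comap_injective_of_surjective hf)
  exact le_iSup_of_le (p.map _ hm) (by simp)

lemma one_le_length (x : M) (hx : x ≠ 0) : 1 ≤ moduleLength R M := by
  rw [moduleLength_eq_iSup]
  have hbt : (⊥ : Submodule R M) < ⊤ := by
    refine lt_of_le_of_ne bot_le (fun h => hx ?_)
    have : x ∈ (⊥ : Submodule R M) := h ▸ Submodule.mem_top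
    simpa using this
  exact le_iSup_of_le ((RelSeries.singleton _ (⊥ : Submodule R M)).snoc ⊤ hbt) (by simp only [Nat.one_le_cast]; exact Nat.le_add_left 1 _)

lemma moduleLength_eq_zero_of_subsingleton [Subsingleton M] : moduleLength R M = 0 := by
  have : Unique (Submodule R M) :=
    ⟨⟨⊥⟩, fun a => by ext x; simp [Subsingleton.elim x 0]⟩
  rw [moduleLength, Order.krullDim_eq_zero_of_unique]
  rfl


variable {R M : Type*} [Ring R] [AddCommGroup M] [Module R M]

lemma step_dichotomy (N : Submodule R M) {x y : Submodule R M} (hxy : x < y) :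
    Submodule.comap N.subtype x < Submodule.comap N.subtype y ∨
      Submodule.map N.mkQ x < Submodule.map N.mkQ y := by
  by_contra h
  push_neg at h
  obtain ⟨h1, h2⟩ := h
  have e1 : Submodule.comap N.subtype x = Submodule.comap N.subtype y :=
    (Submodule.comap_mono hxy.le).lt_or_eq.resolve_left h1
  have e2 : Submodule.map N.mkQ x = Submodule.map N.mkQ y :=
    (Submodule.map_mono hxy.le).lt_or_eq.resolve_left h2
  have einf : N ⊓ x = N ⊓ y := by
    rw [← Submodule.map_comap_subtype, ← Submodule.map_comap_subtype, e1]
  have esup : N ⊔ x = N ⊔ y := by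
    rw [← Submodule.comap_map_mkQ, ← Submodule.comap_map_mkQ, e2]
  have := sup_lt_sup_of_lt_of_inf_le_inf hxy (by rw [inf_comm y N, inf_comm x N]; exact einf.ge)
  rw [sup_comm x N, sup_comm y N] at this
  exact this.ne esup

lemma exists_chains (N : Submodule R M) (p : LTSeries (Submodule R M)) :
    ∃ (c₁ : LTSeries (Submodule R ↥N)) (c₂ : LTSeries (Submodule R (M ⧸ N))),
      c₁.last = Submodule.comap N.subtype p.last ∧ c₂.last = Submodule.map N.mkQ p.last ∧
      p.length ≤ c₁.length + c₂.length := by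
  suffices H : ∀ (n : ℕ) (p : LTSeries (Submodule R M)), p.length = n →
      ∃ (c₁ : LTSeries (Submodule R ↥N)) (c₂ : LTSeries (Submodule R (M ⧸ N))),
      c₁.last = Submodule.comap N.subtype p.last ∧ c₂.last = Submodule.map N.mkQ p.last ∧
      p.length ≤ c₁.length + c₂.length from H _ p rfl
  intro n
  induction n with
  | zero =>
    intro p hp
    exact ⟨RelSeries.singleton _ _, RelSeries.singleton _ _, rfl, rfl, by omega⟩
  | succ n ih =>
    intro p hp
    obtain ⟨c₁, c₂, h1, h2, hle⟩ := ih p.eraseLast (by simp [RelSeries.eraseLast, hp])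
    have hlast : p.eraseLast.last < p.last :=
      p.eraseLast_last_rel_last (by omega)
    have hEL : p.eraseLast.length = n := by simp [RelSeries.eraseLast, hp]
    rcases step_dichotomy N hlast with hd | hd
    · rcases (Submodule.map_mono hlast.le :
          Submodule.map N.mkQ p.eraseLast.last ≤ Submodule.map N.mkQ p.last).lt_or_eq with hm | hm
      · exact ⟨c₁.snoc _ (h1 ▸ hd), c₂.snoc _ (h2 ▸ hm), by simp, by simp, by
          simp [RelSeries.snoc_length]; omega⟩
      · exact ⟨c₁.snoc _ (h1 ▸ hd), c₂, by simp, h2.trans hm, by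
          simp [RelSeries.snoc_length]; omega⟩
    · rcases (Submodule.comap_mono hlast.le :
          Submodule.comap N.subtype p.eraseLast.last ≤ Submodule.comap N.subtype p.last).lt_or_eq
          with hm | hm
      · exact ⟨c₁.snoc _ (h1 ▸ hm), c₂.snoc _ (h2 ▸ hd), by simp, by simp, by
          simp [RelSeries.snoc_length]; omega⟩
      · exact ⟨c₁, c₂.snoc _ (h2 ▸ hd), h1.trans hm, by simp, by
          simp [RelSeries.snoc_length]; omega⟩


lemma length_le_add (N : Submodule R M) :
    moduleLength R M ≤ moduleLength R ↥N + moduleLength R (M ⧸ N) := by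
  rw [moduleLength_eq_iSup (M := M)]
  refine iSup_le fun p => ?_
  obtain ⟨c₁, c₂, -, -, hle⟩ := exists_chains N p
  calc (p.length : ℕ∞) ≤ (c₁.length : ℕ∞) + (c₂.length : ℕ∞) := by exact_mod_cast hle
    _ ≤ _ := by
        rw [moduleLength_eq_iSup (M := ↥N), moduleLength_eq_iSup (M := M ⧸ N)]
        exact add_le_add (le_iSup (fun p : LTSeries (Submodule R ↥N) => (p.length : ℕ∞)) c₁)
          (le_iSup (fun p : LTSeries (Submodule R (M ⧸ N)) => (p.length : ℕ∞)) c₂)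

lemma add_length_le (N : Submodule R M) :
    moduleLength R ↥N + moduleLength R (M ⧸ N) ≤ moduleLength R M := by
  rw [moduleLength_eq_iSup (M := ↥N), moduleLength_eq_iSup (M := M ⧸ N),
    ENat.iSup_add]
  refine iSup_le fun p => ?_
  rw [ENat.add_iSup]
  refine iSup_le fun q => ?_
  have hmap : StrictMono (Submodule.map N.subtype) :=
    Monotone.strictMono_of_injective (fun _ _ h => Submodule.map_mono h)
      (Submodule.map_injective_of_injective (Submodule.injective_subtype N))
  have hcomap : StrictMono (Submodule.comap N.mkQ) :=
    Monotone.strictMono_of_injective (fun _ _ h => Submodule.comap_mono h)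
      (Submodule.comap_injective_of_surjective N.mkQ_surjective)
  set m₁ := p.map _ hmap with hm₁
  set m₂ := q.map _ hcomap with hm₂
  have h12 : m₁.last ≤ m₂.head := by
    have hA : m₁.last ≤ N := by
      rw [hm₁, LTSeries.last_map]
      exact Submodule.map_subtype_le N _
    have hB : N ≤ m₂.head := by
      rw [hm₂, LTSeries.head_map]
      calc N = Submodule.comap N.mkQ ⊥ := by rw [Submodule.comap_bot, Submodule.ker_mkQ]
        _ ≤ _ := Submodule.comap_mono bot_le
    exact hA.trans hB
  rw [moduleLength_eq_iSup (M := M)]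
  rcases h12.lt_or_eq with hlt | heq
  · refine le_iSup_of_le (m₁.append m₂ hlt) ?_
    have : (m₁.append m₂ hlt).length = p.length + q.length + 1 := by
      simp [RelSeries.append_length, hm₁, hm₂]
    rw [this]
    push_cast
    have : (p.length : ℕ∞) + q.length ≤ (p.length : ℕ∞) + q.length + 1 := le_self_add
    exact this
  · refine le_iSup_of_le (m₁.smash m₂ heq) ?_
    have : (m₁.smash m₂ heq).length = p.length + q.length := by
      simp [hm₁, hm₂]
    rw [this]; push_cast; exact le_refl _

end LengthLemmas

section SpanLemmas

universe u

variable {R : Type*} [Ring R]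

lemma length_eq_zero_iff_forall {M : Type u} [AddCommGroup M] [Module R M]
    (h : moduleLength R M = 0) : ∀ x : M, x = 0 := by
  intro x
  by_contra hx
  have := one_le_length (R := R) x hx
  rw [h] at this
  exact (by norm_num : ¬ ((1:ℕ∞) ≤ 0)) this

lemma enat_add_one_le {a : ℕ∞} {t : ℕ} (h : a + 1 ≤ (t : ℕ∞) + 1) : a ≤ t := by
  cases a with
  | top => exfalso; rw [top_add] at h; exact (lt_of_le_of_lt h (by exact_mod_cast lt_top_iff_ne_top.2 (ENat.coe_ne_top (t+1)))).ne rfl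
  | coe a =>
    have : ((a + 1 : ℕ) : ℕ∞) ≤ ((t + 1 : ℕ) : ℕ∞) := by push_cast; exact_mod_cast h
    have := Nat.cast_le.mp this
    exact_mod_cast Nat.le_of_succ_le_succ this

lemma exists_span_of_length_le :
    ∀ (t : ℕ) (M : Type u) [AddCommGroup M] [Module R M],
      moduleLength R M ≤ (t : ℕ∞) → ∃ g : Fin t → M, Submodule.span R (Set.range g) = ⊤ := by
  intro t
  induction t with
  | zero =>
    intro M _ _ h
    have h0 : moduleLength R M = 0 := le_antisymm (by exact_mod_cast h) zero_le
    refine ⟨Fin.elim0, ?_⟩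
    rw [eq_top_iff]
    intro x _
    rw [length_eq_zero_iff_forall h0 x]
    exact Submodule.zero_mem _
  | succ t ih =>
    intro M _ _ h
    by_cases htriv : ∀ x : M, x = 0
    · refine ⟨fun _ => 0, ?_⟩
      rw [eq_top_iff]
      intro x _
      rw [htriv x]
      exact Submodule.zero_mem _
    · push_neg at htriv
      obtain ⟨x, hx⟩ := htriv
      set N : Submodule R M := Submodule.span R {x} with hN
      have h1N : 1 ≤ moduleLength R ↥N := by
        refine one_le_length (⟨x, Submodule.mem_span_singleton_self x⟩ : ↥N) ?_
        intro hc
        exact hx (congrArg Subtype.val hc)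
      have hq : moduleLength R (M ⧸ N) ≤ (t : ℕ∞) := by
        have := add_length_le N
        have h2 : moduleLength R (M ⧸ N) + 1 ≤ (t : ℕ∞) + 1 := by
          calc moduleLength R (M ⧸ N) + 1 ≤ moduleLength R (M ⧸ N) + moduleLength R ↥N :=
                add_le_add_right h1N _
            _ = moduleLength R ↥N + moduleLength R (M ⧸ N) := by rw [add_comm]
            _ ≤ moduleLength R M := add_length_le N
            _ ≤ ((t : ℕ∞) + 1) := by exact_mod_cast h
        exact enat_add_one_le h2
      obtain ⟨g', hg'⟩ := ih (M ⧸ N) hq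
      choose glift hglift using fun j => N.mkQ_surjective (g' j)
      refine ⟨Fin.cons x glift, ?_⟩
      have hmap : Submodule.map N.mkQ (Submodule.span R (Set.range glift)) = ⊤ := by
        rw [Submodule.map_span]
        have : N.mkQ '' Set.range glift = Set.range g' := by
          ext z
          constructor
          · rintro ⟨w, ⟨j, rfl⟩, rfl⟩; exact ⟨j, (hglift j).symm⟩
          · rintro ⟨j, rfl⟩; exact ⟨glift j, ⟨j, rfl⟩, (hglift j).symm ▸ rfl⟩
        rw [this, hg']
      have hsup : N ⊔ Submodule.span R (Set.range glift) = ⊤ := by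
        have := congrArg (Submodule.comap N.mkQ) hmap
        rwa [Submodule.comap_map_mkQ, Submodule.comap_top] at this
      rw [Fin.range_cons, Submodule.span_insert, ← hN]
      · exact hsup
end SpanLemmas

section AnnLemmas

universe u

variable {R : Type*} [CommRing R]

/-- A module annihilated by `c` and generated by `t` elements has length at most
`t * (length of R/c)`. -/
lemma length_le_of_span_of_ann (c : Ideal R) (n : ℕ)
    (hc : moduleLength R (R ⧸ c) ≤ (n : ℕ∞)) :
    ∀ (t : ℕ) (M : Type u) [AddCommGroup M] [Module R M],
      (∀ a ∈ c, ∀ x : M, a • x = 0) →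
      (∃ g : Fin t → M, Submodule.span R (Set.range g) = ⊤) →
      moduleLength R M ≤ ((t * n : ℕ) : ℕ∞) := by
  intro t
  induction t with
  | zero =>
    intro M _ _ _ hg
    obtain ⟨g, hg⟩ := hg
    have : ∀ x : M, x = 0 := by
      intro x
      have hx : x ∈ Submodule.span R (Set.range g) := hg ▸ Submodule.mem_top
      rw [Set.range_eq_empty, Submodule.span_empty] at hx
      · simpa using hx
    have : Subsingleton M := ⟨fun a b => by rw [this a, this b]⟩
    rw [moduleLength_eq_zero_of_subsingleton]
    simp
  | succ t ih =>
    intro M _ _ hann hg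
    obtain ⟨g, hg⟩ := hg
    set x := g (Fin.last t) with hx
    set N : Submodule R M := Submodule.span R {x} with hN
    -- length of N is at most n, via a surjection from R/c
    have hNn : moduleLength R ↥N ≤ (n : ℕ∞) := by
      have hmem : ∀ a : R, a • x ∈ N := fun a =>
        Submodule.smul_mem _ a (Submodule.mem_span_singleton_self x)
      set f₀ : R →ₗ[R] ↥N :=
        LinearMap.codRestrict N (LinearMap.toSpanSingleton R M x) hmem with hf₀
      have hker : c ≤ LinearMap.ker f₀ := by
        intro a ha
        rw [LinearMap.mem_ker]
        ext
        exact hann a ha x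
      have hsurj : Function.Surjective (Submodule.liftQ c f₀ hker) := by
        rintro ⟨y, hy⟩
        rw [hN] at hy
        obtain ⟨a, ha⟩ := Submodule.mem_span_singleton.1 hy
        exact ⟨Submodule.Quotient.mk a, by ext; exact ha⟩
      exact le_trans (length_le_of_surjective _ hsurj) hc
    have hannQ : ∀ a ∈ c, ∀ y : M ⧸ N, a • y = 0 := by
      intro a ha y
      obtain ⟨z, rfl⟩ := N.mkQ_surjective y
      rw [← map_smul, hann a ha z, map_zero]
    have hgQ : ∃ g' : Fin t → M ⧸ N, Submodule.span R (Set.range g') = ⊤ := by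
      refine ⟨fun j => N.mkQ (g j.castSucc), ?_⟩
      have hmap : Submodule.map N.mkQ (Submodule.span R (Set.range g)) = ⊤ := by
        rw [hg, Submodule.map_top, Submodule.range_mkQ]
      rw [Submodule.map_span] at hmap
      have himg : N.mkQ '' Set.range g ⊆
          insert 0 (Set.range fun j : Fin t => N.mkQ (g j.castSucc)) := by
        rintro _ ⟨_, ⟨i, rfl⟩, rfl⟩
        rcases Fin.eq_castSucc_or_eq_last i with ⟨j, rfl⟩ | rfl
        · exact Set.mem_insert_of_mem _ ⟨j, rfl⟩
        · left
          rw [← hx]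
          exact (Submodule.Quotient.mk_eq_zero N).2 (Submodule.mem_span_singleton_self x)
      rw [eq_top_iff, ← hmap]
      calc Submodule.span R (N.mkQ '' Set.range g)
          ≤ Submodule.span R (insert 0 (Set.range fun j : Fin t => N.mkQ (g j.castSucc))) :=
            Submodule.span_mono himg
        _ = _ := Submodule.span_insert_zero
    have hQ : moduleLength R (M ⧸ N) ≤ ((t * n : ℕ) : ℕ∞) := ih (M ⧸ N) hannQ hgQ
    calc moduleLength R M ≤ moduleLength R ↥N + moduleLength R (M ⧸ N) := length_le_add N
      _ ≤ (n : ℕ∞) + ((t * n : ℕ) : ℕ∞) := add_le_add hNn hQ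
      _ = (((t + 1) * n : ℕ) : ℕ∞) := by push_cast; ring

/-- If the maximal ideal of a local ring is contained in `c`, then `R/c` has length at most 1. -/
lemma length_le_one_of_max {R : Type*} [CommRing R] [IsLocalRing R] (c : Ideal R)
    (hc : IsLocalRing.maximalIdeal R ≤ c) : moduleLength R (R ⧸ c) ≤ 1 := by
  rw [moduleLength_eq_iSup]
  refine iSup_le fun p => ?_
  by_contra hlen
  push_neg at hlen
  have h2 : 2 ≤ p.length := by exact_mod_cast (by exact_mod_cast hlen : (1:ℕ∞) < p.length)
  have hcomap : StrictMono (Submodule.comap c.mkQ) :=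
    Monotone.strictMono_of_injective (fun _ _ h => Submodule.comap_mono h)
      (Submodule.comap_injective_of_surjective c.mkQ_surjective)
  set J : Fin 3 → Ideal R := fun i =>
    Submodule.comap c.mkQ (p ⟨i.1, by omega⟩) with hJ
  have hcJ : ∀ i : Fin 3, c ≤ J i := by
    intro i
    have : c = Submodule.comap c.mkQ ⊥ := by rw [Submodule.comap_bot, Submodule.ker_mkQ]
    conv_lhs => rw [this]
    exact Submodule.comap_mono bot_le
  have hJm : ∀ i : Fin 3, IsLocalRing.maximalIdeal R ≤ J i := fun i => le_trans hc (hcJ i)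
  have h01 : J 0 < J 1 := hcomap (p.strictMono (by simp [Fin.lt_def]))
  have h12 : J 1 < J 2 := hcomap (p.strictMono (by simp [Fin.lt_def]))
  have hmax := IsLocalRing.maximalIdeal.isMaximal R
  have hJ0 : J 0 = IsLocalRing.maximalIdeal R :=
    (hmax.eq_of_le (fun h => (h ▸ h01 : ⊤ < J 1).not_ge le_top) (hJm 0)).symm
  have hJ1 : J 1 = IsLocalRing.maximalIdeal R :=
    (hmax.eq_of_le (fun h => (h ▸ h12 : ⊤ < J 2).not_ge le_top) (hJm 1)).symm
  rw [hJ0, hJ1] at h01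
  exact h01.ne rfl

end AnnLemmas

section AlgebraHelpers

variable {R Q : Type*} [CommRing R] [CommRing Q] [Algebra R Q]

lemma smul_mul_le (I : Ideal R) (M N : Submodule R Q) : (I • M) * N ≤ I • (M * N) := by
  rw [Submodule.mul_le]
  intro x hx y hy
  refine Submodule.smul_induction_on hx ?_ ?_
  · intro a ha m hm
    rw [smul_mul_assoc]
    exact Submodule.smul_mem_smul ha (Submodule.mul_mem_mul hm hy)
  · intro x1 x2 h1 h2
    rw [add_mul]
    exact Submodule.add_mem _ h1 h2

lemma one_notin_smul_sq [IsLocalRing R] {K : Submodule R Q} (hFG : K.FG)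
    (hone : (1 : Submodule R Q) ≤ K) (hKK : K * K * K = K * K) (hQ : (1 : Q) ≠ 0)
    (h1 : (1 : Q) ∈ (IsLocalRing.maximalIdeal R) • (K * K)) : False := by
  have hsq : (K * K) * (K * K) = K * K := by
    rw [← mul_assoc, hKK, hKK]
  have hKle : K * K ≤ (IsLocalRing.maximalIdeal R) • (K * K) := by
    intro x hx
    have : (1 : Q) * x ∈ ((IsLocalRing.maximalIdeal R) • (K * K)) * (K * K) :=
      Submodule.mul_mem_mul h1 hx
    rw [one_mul] at this
    have h2 := smul_mul_le (IsLocalRing.maximalIdeal R) (K * K) (K * K) this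
    rwa [hsq] at h2
  have hbot : K * K = ⊥ := by
    refine Submodule.eq_bot_of_le_smul_of_le_jacobson_bot _ _ (hFG.mul hFG) hKle ?_
    exact (IsLocalRing.jacobson_eq_maximalIdeal ⊥ (by
      intro h
      exact one_ne_zero ((Submodule.mem_bot R).1 ((Ideal.eq_top_iff_one (⊥ : Ideal R)).1 h)))).ge
  have h1K : (1 : Q) ∈ K * K := by
    have hKKle : K ≤ K * K := by
      have := mul_le_mul' hone (le_refl K)
      rwa [one_mul] at this
    exact hKKle (hone (Submodule.one_le.1 (le_refl _)))
  rw [hbot] at h1K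
  exact hQ ((Submodule.mem_bot R).1 h1K)

lemma one_notin_smul [IsLocalRing R] {K : Submodule R Q} (hFG : K.FG)
    (hone : (1 : Submodule R Q) ≤ K) (hKK : K * K * K = K * K) (hQ : (1 : Q) ≠ 0)
    (h1 : (1 : Q) ∈ (IsLocalRing.maximalIdeal R) • K) : False := by
  refine one_notin_smul_sq hFG hone hKK hQ ?_
  refine smul_mono_right (IsLocalRing.maximalIdeal R) (?_ : K ≤ K * K) h1
  have := mul_le_mul' (le_refl K) hone
  rwa [mul_one] at this

end AlgebraHelpers

set_option maxHeartbeats 1600000 in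
/-- For an `n`-Goto one-dimensional CM local ring `R` (`n ≥ 2`) with `v(R/𝔠) = 1`,
one has `r(R) + n ≤ e₁(I) ≤ n · r(R)`, where `e₁(I) = ℓ_R(K/R) + n` is the first
Hilbert coefficient of the canonical ideal and `r = r(R) = μ_R(K)` the CM type. -/
theorem goto_first_hilbert_coefficient_bounds
    (R : Type*) [CommRing R] [IsNoetherianRing R] [IsLocalRing R]
    (hdim : ringKrullDim R = 1)
    (hCM : ∃ x ∈ maximalIdeal R, x ∈ nonZeroDivisors R)
    (K : Submodule R (FractionRing R)) (hK : IsFracCanonical R (FractionRing R) K)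
    (n : ℕ) (hn : 2 ≤ n)
    (hsq : K ^ 2 = K ^ 3)
    (hlen : moduleLength R (R ⧸ condIdeal R (FractionRing R) K) = n)
    (hv : ∃ x : R, maximalIdeal R ≤ condIdeal R (FractionRing R) K ⊔ Ideal.span {x})
    (r : ℕ)
    (hrgen : ∃ g : Fin r → FractionRing R, K = Submodule.span R (Set.range g))
    (hrmin : ∀ m : ℕ, m < r →
      ¬ ∃ g : Fin m → FractionRing R, K = Submodule.span R (Set.range g)) :
    ((r + n : ℕ) : ℕ∞) ≤
        moduleLength R (↥K ⧸ Submodule.comap K.subtype (1 : Submodule R (FractionRing R))) +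
          (n : ℕ∞) ∧
      moduleLength R (↥K ⧸ Submodule.comap K.subtype (1 : Submodule R (FractionRing R))) +
          (n : ℕ∞) ≤ ((n * r : ℕ) : ℕ∞) := by
  classical
  obtain ⟨hFG, hone, hint, hdual⟩ := hK
  set Q : Type _ := FractionRing R with hQdef
  have hinj : Function.Injective (algebraMap R Q) :=
    IsLocalization.injective Q (le_refl (nonZeroDivisors R))
  have hQ1 : (1 : Q) ≠ 0 := by
    intro h
    exact one_ne_zero (hinj (by rw [map_one, map_zero, h]))
  have hKK : K * K * K = K * K := by
    calc K * K * K = K ^ 3 := by rw [pow_succ, sq]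
      _ = K ^ 2 := hsq.symm
      _ = K * K := sq K
  have h1K : (1 : Q) ∈ K := hone (Submodule.one_le.1 (le_refl _))
  set c : Ideal R := condIdeal R Q K with hcdef
  set A : Submodule R Q := Subalgebra.toSubmodule (Algebra.adjoin R (K : Set Q)) with hAdef
  have hcmem : ∀ a : R, a ∈ c ↔ ∀ s ∈ A, algebraMap R Q a * s ∈ (1 : Submodule R Q) := by
    intro a
    rw [hcdef, condIdeal, Submodule.mem_comap, Algebra.linearMap_apply,
      Submodule.mem_div_iff_forall_mul_mem]
  have hKA : K ≤ A := fun x hx => Algebra.subset_adjoin hx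
  set N₀ : Submodule R ↥K := Submodule.comap K.subtype (1 : Submodule R Q) with hN₀
  have hann : ∀ a ∈ c, ∀ x : ↥K ⧸ N₀, a • x = 0 := by
    intro a ha x
    obtain ⟨y, rfl⟩ := N₀.mkQ_surjective x
    rw [← map_smul, Submodule.mkQ_apply, Submodule.Quotient.mk_eq_zero]
    have : (↑(a • y) : Q) ∈ (1 : Submodule R Q) := by
      have := (hcmem a).1 ha (y : Q) (hKA y.2)
      rwa [← Algebra.smul_def] at this
    exact this
  have hmK1 : (1 : Q) ∈ (maximalIdeal R) • K → False :=
    one_notin_smul hFG hone hKK hQ1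
  -- r is positive
  have hrpos : r ≠ 0 := by
    intro h0
    subst h0
    obtain ⟨g, hg⟩ := hrgen
    rw [Set.range_eq_empty, Submodule.span_empty] at hg
    rw [hg] at h1K
    exact hQ1 ((Submodule.mem_bot R).1 h1K)
  obtain ⟨r', rfl⟩ : ∃ r', r = r' + 1 := ⟨r - 1, by omega⟩
  ---------------------------------------------------------------
  -- UPPER BOUND
  ---------------------------------------------------------------
  have hupper : moduleLength R (↥K ⧸ N₀) ≤ ((r' * n : ℕ) : ℕ∞) := by
    obtain ⟨g, hg⟩ := hrgen
    have hgK : ∀ i, g i ∈ K := fun i => hg ▸ Submodule.subset_span ⟨i, rfl⟩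
    have h1span : (1 : Q) ∈ Submodule.span R (Set.range g) := hg ▸ h1K
    obtain ⟨cf, hcf⟩ := (Submodule.mem_span_range_iff_exists_fun R).1 h1span
    by_cases hall : ∀ i, cf i ∈ maximalIdeal R
    · exfalso
      apply hmK1
      rw [← hcf]
      exact Submodule.sum_mem _ fun i _ => Submodule.smul_mem_smul (hall i) (hgK i)
    · push_neg at hall
      obtain ⟨i, hi⟩ := hall
      have hu : IsUnit (cf i) := by
        by_contra hnu
        exact hi ((IsLocalRing.mem_maximalIdeal _).2 (mem_nonunits_iff.2 hnu))
      obtain ⟨u, hu⟩ := hu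
      set S : Set Q := Set.range (g ∘ i.succAbove) with hS
      have hSK : S ⊆ (K : Set Q) := by rintro _ ⟨j, rfl⟩; exact hgK _
      have hgi : g i ∈ Submodule.span R (insert (1 : Q) S) := by
        have hsum : cf i • g i = 1 - ∑ j : Fin r', cf (i.succAbove j) • g (i.succAbove j) := by
          have := Fin.sum_univ_succAbove (fun k => cf k • g k) i
          rw [hcf] at this
          rw [this]
          ring
        have hrhs : (1 : Q) - ∑ j : Fin r', cf (i.succAbove j) • g (i.succAbove j) ∈
            Submodule.span R (insert (1 : Q) S) := by
          refine Submodule.sub_mem _ (Submodule.subset_span (Set.mem_insert _ _)) ?_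
          refine Submodule.sum_mem _ fun j _ => Submodule.smul_mem _ _ ?_
          exact Submodule.subset_span (Set.mem_insert_of_mem _ ⟨j, rfl⟩)
        have : g i = (↑u⁻¹ : R) • (cf i • g i) := by
          rw [smul_smul, ← hu, Units.inv_mul, one_smul]
        rw [this, hsum]
        exact Submodule.smul_mem _ _ hrhs
      have hgspan : K = Submodule.span R (insert (1 : Q) S) := by
        apply le_antisymm
        · rw [hg, Submodule.span_le]
          rintro _ ⟨j, rfl⟩
          by_cases hj : j = i
          · subst hj; exact hgi
          · obtain ⟨j', hj'⟩ := Fin.exists_succAbove_eq hj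
            exact Submodule.subset_span (Set.mem_insert_of_mem _ ⟨j', by rw [Function.comp, hj']⟩)
        · rw [Submodule.span_le]
          rintro x hx
          rcases Set.mem_insert_iff.1 hx with rfl | hx
          · exact h1K
          · exact hSK hx
      set y : Fin r' → ↥K := fun j => ⟨g (i.succAbove j), hgK _⟩ with hy
      have htopK : (⊤ : Submodule R ↥K) ≤ Submodule.span R (Set.range y) ⊔ N₀ := by
        rw [← Submodule.map_le_map_iff_of_injective (Submodule.injective_subtype K)]
        rw [Submodule.map_sup, Submodule.map_subtype_top, Submodule.map_span, hN₀,
          Submodule.map_comap_subtype]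
        have himg : K.subtype '' Set.range y = S := by
          ext z
          constructor
          · rintro ⟨_, ⟨j, rfl⟩, rfl⟩; exact ⟨j, rfl⟩
          · rintro ⟨j, rfl⟩; exact ⟨y j, ⟨j, rfl⟩, rfl⟩
        rw [himg]
        calc K = Submodule.span R (insert (1 : Q) S) := hgspan
          _ = (R ∙ (1 : Q)) ⊔ Submodule.span R S := Submodule.span_insert _ _
          _ ≤ Submodule.span R S ⊔ K ⊓ (1 : Submodule R Q) := by
              refine sup_le (le_sup_of_le_right (le_inf ?_ ?_)) le_sup_left
              · rw [Submodule.span_le, Set.singleton_subset_iff]; exact h1K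
              · rw [Submodule.one_eq_span]
      have hMspan : ∃ q : Fin r' → (↥K ⧸ N₀),
          Submodule.span R (Set.range q) = ⊤ := by
        refine ⟨fun j => N₀.mkQ (y j), ?_⟩
        rw [eq_top_iff]
        calc (⊤ : Submodule R (↥K ⧸ N₀)) = Submodule.map N₀.mkQ ⊤ := by
              rw [Submodule.map_top, Submodule.range_mkQ]
          _ ≤ Submodule.map N₀.mkQ (Submodule.span R (Set.range y) ⊔ N₀) :=
              Submodule.map_mono htopK
          _ = Submodule.map N₀.mkQ (Submodule.span R (Set.range y)) ⊔
                Submodule.map N₀.mkQ N₀ := Submodule.map_sup _ _ _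
          _ ≤ _ := by
              rw [Submodule.mkQ_map_self, Submodule.map_span, ← Set.range_comp, sup_bot_eq]
              exact le_of_eq (by rw [Function.comp_def])
      exact length_le_of_span_of_ann c n (le_of_eq hlen) r' _ hann hMspan
  ---------------------------------------------------------------
  -- LOWER BOUND
  ---------------------------------------------------------------
  have hKfin : Module.Finite R ↥K := Module.Finite.iff_fg.2 hFG
  have hMfin : Module.Finite R (↥K ⧸ N₀) := Module.Finite.of_surjective N₀.mkQ N₀.mkQ_surjective
  set N₁ : Submodule R (↥K ⧸ N₀) := (maximalIdeal R) • ⊤ with hN₁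
  have hjac : maximalIdeal R ≤ Ideal.jacobson ⊥ :=
    (IsLocalRing.jacobson_eq_maximalIdeal ⊥ (by
      intro h
      exact one_ne_zero ((Submodule.mem_bot R).1 ((Ideal.eq_top_iff_one (⊥ : Ideal R)).1 h)))).ge
  have hN₁ne : N₁ ≠ ⊥ := by
    intro hbot
    have hsm : ∀ a ∈ maximalIdeal R, ∀ k : Q, k ∈ K → a • k ∈ (1 : Submodule R Q) := by
      intro a ha k hk
      have hz : a • (N₀.mkQ ⟨k, hk⟩) = 0 := by
        have : a • (N₀.mkQ ⟨k, hk⟩) ∈ N₁ := Submodule.smul_mem_smul ha Submodule.mem_top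
        rwa [hbot, Submodule.mem_bot] at this
      rw [← map_smul, Submodule.mkQ_apply, Submodule.Quotient.mk_eq_zero] at hz
      exact hz
    set T : Submodule R Q := Submodule.map (Algebra.linearMap R Q) (maximalIdeal R) with hT
    have hT1 : T ≤ (1 : Submodule R Q) := by
      rw [Submodule.one_eq_range]
      rintro _ ⟨b, _, rfl⟩
      exact ⟨b, rfl⟩
    by_cases hTcase : ∀ a ∈ maximalIdeal R, ∀ k ∈ K, a • k ∈ T
    · -- maximal ideal is contained in the conductor: contradiction with n ≥ 2
      have hstep : ∀ s ∈ A, ∀ a ∈ maximalIdeal R, a • s ∈ T := by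
        intro s hs
        rw [hAdef, Algebra.adjoin_eq_span] at hs
        refine Submodule.span_induction ?_ ?_ ?_ ?_ hs
        · intro x hx
          refine Submonoid.closure_induction ?_ ?_ ?_ hx
          · intro z hz a ha
            exact hTcase a ha z hz
          · intro a ha
            rw [hT]
            refine ⟨a, ha, ?_⟩
            rw [Algebra.linearMap_apply, Algebra.algebraMap_eq_smul_one]
          · intro z w hz hw hz' hw' a ha
            obtain ⟨b, hb, hba⟩ := hz' a ha
            rw [← smul_mul_assoc, ← hba, Algebra.linearMap_apply, ← Algebra.smul_def]
            exact hw' b hb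
        · intro a _
          rw [smul_zero]
          exact Submodule.zero_mem _
        · intro z w _ _ hz' hw' a ha
          rw [smul_add]
          exact Submodule.add_mem _ (hz' a ha) (hw' a ha)
        · intro b z _ hz' a ha
          rw [smul_comm]
          exact Submodule.smul_mem _ _ (hz' a ha)
      have hmc : maximalIdeal R ≤ c := by
        intro a ha
        rw [hcmem]
        intro s hs
        rw [← Algebra.smul_def]
        exact hT1 (hstep s hs a ha)
      have hle1 := length_le_one_of_max c hmc
      rw [hlen] at hle1
      have : n ≤ 1 := by exact_mod_cast hle1
      omega
    · push_neg at hTcase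
      obtain ⟨a, ha, k, hk, hnT⟩ := hTcase
      have h1m : a • k ∈ (1 : Submodule R Q) := hsm a ha k hk
      rw [Submodule.one_eq_range] at h1m
      obtain ⟨b, hb⟩ := h1m
      rw [Algebra.linearMap_apply] at hb
      have hbu : IsUnit b := by
        by_contra hnu
        refine hnT ?_
        rw [hT]
        exact ⟨b, (IsLocalRing.mem_maximalIdeal _).2 (mem_nonunits_iff.2 hnu),
          by rw [Algebra.linearMap_apply, hb]⟩
      obtain ⟨u, rfl⟩ := hbu
      apply hmK1
      have h1eq : (1 : Q) = a • ((↑u⁻¹ : R) • k) := by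
        calc (1 : Q) = algebraMap R Q ((↑u⁻¹ : R) * ↑u) := by
              rw [Units.inv_mul, map_one]
          _ = algebraMap R Q (↑u⁻¹ : R) * algebraMap R Q (↑u : R) := by rw [map_mul]
          _ = algebraMap R Q (↑u⁻¹ : R) * (a • k) := by rw [hb]
          _ = (↑u⁻¹ : R) • (a • k) := (Algebra.smul_def _ _).symm
          _ = a • ((↑u⁻¹ : R) • k) := smul_comm _ _ _
      rw [h1eq]
      exact Submodule.smul_mem_smul ha (K.smul_mem _ hk)
  have hlow2 : (r' : ℕ∞) ≤ moduleLength R ((↥K ⧸ N₀) ⧸ N₁) := by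
    by_contra hlt
    push_neg at hlt
    obtain ⟨t, htEq, htlt⟩ : ∃ t : ℕ, moduleLength R ((↥K ⧸ N₀) ⧸ N₁) = (t : ℕ∞) ∧ t < r' := by
      cases hml : moduleLength R ((↥K ⧸ N₀) ⧸ N₁) with
      | top => rw [hml] at hlt; exact absurd hlt (not_top_lt)
      | coe t =>
        rw [hml] at hlt
        exact ⟨t, rfl, by exact_mod_cast hlt⟩
    obtain ⟨q, hq⟩ := exists_span_of_length_le t _ (le_of_eq htEq)
    choose y2 hy2 using fun j => N₁.mkQ_surjective (q j)
    have hsup2 : (⊤ : Submodule R (↥K ⧸ N₀)) ≤ Submodule.span R (Set.range y2) ⊔ N₁ := by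
      have hmap : Submodule.map N₁.mkQ (Submodule.span R (Set.range y2)) = ⊤ := by
        rw [Submodule.map_span, ← Set.range_comp]
        have : (N₁.mkQ ∘ y2) = q := funext fun j => hy2 j
        rw [this, hq]
      have := congrArg (Submodule.comap N₁.mkQ) hmap
      rw [Submodule.comap_map_mkQ, Submodule.comap_top] at this
      rw [← this, sup_comm]
    have hNak : (⊤ : Submodule R (↥K ⧸ N₀)) ≤ Submodule.span R (Set.range y2) := by
      refine Submodule.le_of_le_smul_of_le_jacobson_bot (Module.finite_def.mp hMfin) hjac ?_
      rw [← hN₁]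
      exact hsup2
    choose z hz using fun j => N₀.mkQ_surjective (y2 j)
    have hmapz : Submodule.map N₀.mkQ (Submodule.span R (Set.range z)) = ⊤ := by
      rw [Submodule.map_span, ← Set.range_comp]
      have : (N₀.mkQ ∘ z) = y2 := funext fun j => hz j
      rw [this]
      exact le_antisymm le_top hNak
    have htopK2 : (⊤ : Submodule R ↥K) ≤ Submodule.span R (Set.range z) ⊔ N₀ := by
      have := congrArg (Submodule.comap N₀.mkQ) hmapz
      rw [Submodule.comap_map_mkQ, Submodule.comap_top] at this
      rw [← this, sup_comm]
    have hKspan : K = Submodule.span R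
        (Set.range (Fin.cons (1 : Q) (fun j => (z j : Q)) : Fin (t + 1) → Q)) := by
      rw [Fin.range_cons]
      apply le_antisymm
      · have hm := Submodule.map_mono htopK2 (f := K.subtype)
        rw [Submodule.map_subtype_top, Submodule.map_sup, Submodule.map_span, hN₀,
          Submodule.map_comap_subtype] at hm
        have himg : K.subtype '' Set.range z = Set.range fun j => (z j : Q) := by
          ext w
          constructor
          · rintro ⟨_, ⟨j, rfl⟩, rfl⟩; exact ⟨j, rfl⟩
          · rintro ⟨j, rfl⟩; exact ⟨z j, ⟨j, rfl⟩, rfl⟩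
        rw [himg] at hm
        refine hm.trans ?_
        rw [Submodule.span_insert]
        refine sup_le (le_sup_of_le_right le_rfl) (le_sup_of_le_left ?_)
        rw [← Submodule.one_eq_span]
        exact inf_le_right
      · rw [Submodule.span_le]
        rintro w hw
        rcases Set.mem_insert_iff.1 hw with rfl | ⟨j, rfl⟩
        · exact h1K
        · exact (z j).2
    exact hrmin (t + 1) (by omega) ⟨_, hKspan⟩
  have hN₁1 : 1 ≤ moduleLength R ↥N₁ := by
    obtain ⟨x, hxN, hx0⟩ := (Submodule.ne_bot_iff N₁).1 hN₁ne
    refine one_le_length (⟨x, hxN⟩ : ↥N₁) ?_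
    intro hcon
    exact hx0 (congrArg Subtype.val hcon)
  have hlower : ((r' + 1 : ℕ) : ℕ∞) ≤ moduleLength R (↥K ⧸ N₀) := by
    calc ((r' + 1 : ℕ) : ℕ∞) = 1 + (r' : ℕ∞) := by push_cast; ring
      _ ≤ moduleLength R ↥N₁ + moduleLength R ((↥K ⧸ N₀) ⧸ N₁) := add_le_add hN₁1 hlow2
      _ ≤ moduleLength R (↥K ⧸ N₀) := add_length_le N₁
  constructor
  · calc ((r' + 1 + n : ℕ) : ℕ∞) = ((r' + 1 : ℕ) : ℕ∞) + (n : ℕ∞) := by push_cast; ring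
      _ ≤ moduleLength R (↥K ⧸ N₀) + (n : ℕ∞) := add_le_add_left hlower _
  · calc moduleLength R (↥K ⧸ N₀) + (n : ℕ∞) ≤ ((r' * n : ℕ) : ℕ∞) + (n : ℕ∞) :=
        add_le_add_left hupper _
      _ = ((n * (r' + 1) : ℕ) : ℕ∞) := by push_cast; ring
end

section
/- Let A = S/(Z² − XY) where S = k[[X,Y,Z]] is a power series ring over a field k, and 𝔭 = (x, z) the image prime ideal. Then 𝔭 has no principal reduction: there is no a ∈ 𝔭 with 𝔭^{r+1} = a·𝔭^r for some r ≥ 0. -/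
noncomputable section QCPRaux

namespace QCPR

open Finset

variable {k : Type*} [Field k]

/-- weighted degree of an exponent vector -/
def wt (w : Fin 3 → ℕ) (e : Fin 3 →₀ ℕ) : ℕ := ∑ i, w i * e i

/-- product of coefficients -/
def cp (c : Fin 3 → k) (e : Fin 3 →₀ ℕ) : k := ∏ i, c i ^ e i

lemma wt_add (w : Fin 3 → ℕ) (e₁ e₂ : Fin 3 →₀ ℕ) :
    wt w (e₁ + e₂) = wt w e₁ + wt w e₂ := by
  simp [wt, Finsupp.add_apply, mul_add, Finset.sum_add_distrib]

lemma cp_add (c : Fin 3 → k) (e₁ e₂ : Fin 3 →₀ ℕ) :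
    cp c (e₁ + e₂) = cp c e₁ * cp c e₂ := by
  simp [cp, Finsupp.add_apply, pow_add, Finset.prod_mul_distrib]

lemma cp_zero (c : Fin 3 → k) : cp c 0 = 1 := by simp [cp]

lemma wt_zero (w : Fin 3 → ℕ) : wt w 0 = 0 := by simp [wt]

lemma wt_eq_zero (w : Fin 3 → ℕ) (hw : ∀ i, 1 ≤ w i) {e : Fin 3 →₀ ℕ} :
    wt w e = 0 ↔ e = 0 := by
  constructor
  · intro h
    ext i
    have h0 : w i * e i = 0 :=
      (Finset.sum_eq_zero_iff.mp h) i (Finset.mem_univ i)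
    have hwi := hw i
    rcases Nat.mul_eq_zero.mp h0 with h' | h'
    · omega
    · simpa using h'
  · rintro rfl; exact wt_zero w

lemma wt_single (w : Fin 3 → ℕ) (i : Fin 3) : wt w (Finsupp.single i 1) = w i := by
  simp [wt, Finsupp.single_apply, mul_ite]

lemma cp_single (c : Fin 3 → k) (i : Fin 3) : cp c (Finsupp.single i 1) = c i := by
  simp [cp, Finsupp.single_apply, pow_ite]

/-- the finset of exponent vectors of weighted degree `n` -/
def Fs (w : Fin 3 → ℕ) (n : ℕ) : Finset (Fin 3 →₀ ℕ) :=
  (Finset.Iic (Finsupp.equivFunOnFinite.symm fun _ => n)).filter fun e => wt w e = n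

lemma mem_Fs (w : Fin 3 → ℕ) (hw : ∀ i, 1 ≤ w i) {n : ℕ} {e : Fin 3 →₀ ℕ} :
    e ∈ Fs w n ↔ wt w e = n := by
  simp only [Fs, Finset.mem_filter, Finset.mem_Iic, and_iff_right_iff_imp]
  intro h
  intro i
  have h1 : w i * e i ≤ wt w e :=
    Finset.single_le_sum (f := fun j => w j * e j) (fun j _ => Nat.zero_le _)
      (Finset.mem_univ i)
  have h2 : e i ≤ w i * e i := Nat.le_mul_of_pos_left _ (hw i)
  simp only [Finsupp.coe_equivFunOnFinite_symm]
  omega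

/-- the weighted substitution map, as a bare function -/
def phi (w : Fin 3 → ℕ) (c : Fin 3 → k) (f : MvPowerSeries (Fin 3) k) : PowerSeries k :=
  PowerSeries.mk fun n => ∑ e ∈ Fs w n, cp c e * MvPowerSeries.coeff e f

lemma coeff_phi (w : Fin 3 → ℕ) (c : Fin 3 → k) (f : MvPowerSeries (Fin 3) k) (n : ℕ) :
    PowerSeries.coeff n (phi w c f) = ∑ e ∈ Fs w n, cp c e * MvPowerSeries.coeff e f :=
  PowerSeries.coeff_mk _ _

lemma phi_mul (w : Fin 3 → ℕ) (hw : ∀ i, 1 ≤ w i) (c : Fin 3 → k)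
    (f g : MvPowerSeries (Fin 3) k) :
    phi w c (f * g) = phi w c f * phi w c g := by
  classical
  ext n
  rw [PowerSeries.coeff_mul, coeff_phi]
  simp_rw [MvPowerSeries.coeff_mul, Finset.mul_sum, coeff_phi, Finset.sum_mul_sum]
  have L1 : ∀ e ∈ Fs w n, (∑ p ∈ Finset.HasAntidiagonal.antidiagonal e,
      cp c e * (MvPowerSeries.coeff p.1 f * MvPowerSeries.coeff p.2 g)) =
      ∑ p ∈ Finset.HasAntidiagonal.antidiagonal e,
        cp c p.1 * MvPowerSeries.coeff p.1 f * (cp c p.2 * MvPowerSeries.coeff p.2 g) := by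
    intro e _
    refine Finset.sum_congr rfl fun p hp => ?_
    rw [Finset.HasAntidiagonal.mem_antidiagonal] at hp
    rw [← hp, cp_add]
    ring
  rw [Finset.sum_congr rfl L1]
  have hd1 : (↑(Fs w n) : Set (Fin 3 →₀ ℕ)).PairwiseDisjoint Finset.HasAntidiagonal.antidiagonal := by
    intro e1 _ e2 _ hne
    simp only [Function.onFun]
    rw [Finset.disjoint_left]
    intro p hp1 hp2
    rw [Finset.HasAntidiagonal.mem_antidiagonal] at hp1 hp2
    exact hne (hp1 ▸ hp2)
  have hd2 : (↑(Finset.HasAntidiagonal.antidiagonal n) : Set (ℕ × ℕ)).PairwiseDisjoint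
      (fun pq : ℕ × ℕ => Fs w pq.1 ×ˢ Fs w pq.2) := by
    intro pq1 _ pq2 _ hne
    simp only [Function.onFun]
    rw [Finset.disjoint_left]
    intro p hp1 hp2
    rw [Finset.mem_product, mem_Fs w hw, mem_Fs w hw] at hp1 hp2
    exact hne (by rw [Prod.ext_iff]; exact ⟨hp1.1 ▸ hp2.1, hp1.2 ▸ hp2.2⟩)
  rw [← Finset.sum_biUnion hd1]
  simp_rw [← Finset.sum_product']
  rw [← Finset.sum_biUnion hd2]
  apply Finset.sum_congr _ (fun _ _ => rfl)
  ext p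
  simp only [Finset.mem_biUnion, mem_Fs w hw, Finset.HasAntidiagonal.mem_antidiagonal,
    Finset.mem_product, Finset.HasAntidiagonal.mem_antidiagonal]
  constructor
  · rintro ⟨e, hwt, hsum⟩
    exact ⟨(wt w p.1, wt w p.2), by rw [← wt_add, hsum, hwt], rfl, rfl⟩
  · rintro ⟨pq, hpq, h1, h2⟩
    exact ⟨p.1 + p.2, by rw [wt_add, h1, h2, hpq], rfl⟩

lemma phi_one (w : Fin 3 → ℕ) (hw : ∀ i, 1 ≤ w i) (c : Fin 3 → k) :
    phi w c (1 : MvPowerSeries (Fin 3) k) = 1 := by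
  ext n
  rw [coeff_phi]
  simp_rw [MvPowerSeries.coeff_one, mul_ite, mul_one, mul_zero]
  rw [Finset.sum_ite_eq' (Fs w n) 0 (cp c)]
  rw [PowerSeries.coeff_one]
  by_cases hn : n = 0
  · subst hn
    rw [if_pos, if_pos rfl, cp_zero]
    rw [mem_Fs w hw, wt_zero]
  · rw [if_neg, if_neg hn]
    rw [mem_Fs w hw, wt_zero]
    exact fun h => hn h.symm

/-- the weighted substitution ring hom -/
def phiHom (w : Fin 3 → ℕ) (hw : ∀ i, 1 ≤ w i) (c : Fin 3 → k) :
    MvPowerSeries (Fin 3) k →+* PowerSeries k where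
  toFun := phi w c
  map_one' := phi_one w hw c
  map_mul' := phi_mul w hw c
  map_zero' := by ext n; simp [coeff_phi]
  map_add' := fun f g => by
    ext n
    simp [coeff_phi, mul_add, Finset.sum_add_distrib]

lemma phiHom_X (w : Fin 3 → ℕ) (hw : ∀ i, 1 ≤ w i) (c : Fin 3 → k) (i : Fin 3) :
    phiHom w hw c (MvPowerSeries.X i) =
      PowerSeries.C (c i) * (PowerSeries.X : PowerSeries k) ^ (w i) := by
  ext n
  rw [show phiHom w hw c (MvPowerSeries.X i) = phi w c (MvPowerSeries.X i) from rfl]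
  rw [coeff_phi]
  simp_rw [MvPowerSeries.coeff_X, mul_ite, mul_one, mul_zero]
  rw [Finset.sum_ite_eq' (Fs w n) (Finsupp.single i 1) (cp c)]
  rw [PowerSeries.coeff_C_mul, PowerSeries.coeff_X_pow]
  by_cases h : n = w i
  · rw [if_pos ((mem_Fs w hw).mpr (by rw [wt_single]; exact h.symm)), if_pos h,
      cp_single, mul_one]
  · rw [if_neg (fun hmem => h (by
        have hh := (mem_Fs w hw).mp hmem
        rw [wt_single] at hh
        exact hh.symm)), if_neg h, mul_zero]

lemma coeff_zero_phi (w : Fin 3 → ℕ) (hw : ∀ i, 1 ≤ w i) (c : Fin 3 → k)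
    (f : MvPowerSeries (Fin 3) k) :
    PowerSeries.coeff 0 (phi w c f) = MvPowerSeries.constantCoeff f := by
  rw [coeff_phi]
  have hFs : Fs w 0 = {0} := by
    ext e
    rw [mem_Fs w hw, Finset.mem_singleton, wt_eq_zero w hw]
  rw [hFs, Finset.sum_singleton, cp_zero, one_mul]
  rfl

/-- coefficient of `p * (C a * X^m)` -/
lemma coeff_mul_C_X_pow (p : PowerSeries k) (a : k) (m j : ℕ) :
    PowerSeries.coeff j (p * (PowerSeries.C a * PowerSeries.X ^ m)) =
      if m ≤ j then PowerSeries.coeff (j - m) p * a else 0 := by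
  rw [show p * (PowerSeries.C a * PowerSeries.X ^ m)
      = p * PowerSeries.X ^ m * PowerSeries.C a by ring]
  rw [PowerSeries.coeff_mul_C, PowerSeries.coeff_mul_X_pow']
  split_ifs <;> simp

/-- pure ideal-theoretic step: mapping the reduction equation to a domain where the
image of `𝔭` is principal generated by `s` yields `Ψ a ∣ s`. -/
lemma key {R S : Type*} [CommRing R] [CommRing S] [IsDomain S] (Ψ : R →+* S)
    (x z : R) (𝔭 : Ideal R) (h𝔭 : 𝔭 = Ideal.span {x, z}) (a : R) (r : ℕ)
    (hEq : 𝔭 ^ (r + 1) = Ideal.span {a} * 𝔭 ^ r) (s : S) (hs : s ≠ 0)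
    (hspan : Ideal.span {Ψ x, Ψ z} = Ideal.span {s}) : Ψ a ∣ s := by
  have hmap : Ideal.map Ψ 𝔭 = Ideal.span {s} := by
    rw [h𝔭, Ideal.map_span, Set.image_insert_eq, Set.image_singleton, hspan]
  have h1 := congrArg (Ideal.map Ψ) hEq
  rw [Ideal.map_pow, Ideal.map_mul, Ideal.map_pow, hmap, Ideal.map_span,
    Set.image_singleton, Ideal.span_singleton_pow, Ideal.span_singleton_pow,
    Ideal.span_singleton_mul_span_singleton] at h1
  have h2 : s ^ (r + 1) ∈ Ideal.span {Ψ a * s ^ r} := by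
    rw [← h1]; exact Ideal.mem_span_singleton_self _
  rw [Ideal.mem_span_singleton] at h2
  have h3 : s ^ r * Ψ a ∣ s ^ r * s := by
    rw [mul_comm (s ^ r) (Ψ a), ← pow_succ]
    exact h2
  exact (mul_dvd_mul_iff_left (pow_ne_zero r hs)).mp h3

/-- divisibility of `X^m` by a series with vanishing low coefficients is absurd -/
lemma dvd_contra (b : PowerSeries k) (m : ℕ)
    (hdvd : b ∣ (PowerSeries.X : PowerSeries k) ^ m)
    (hcoeff : ∀ j ≤ m, PowerSeries.coeff j b = 0) : False := by
  obtain ⟨h, hh⟩ := hdvd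
  have h1 := congrArg (PowerSeries.coeff m) hh
  rw [PowerSeries.coeff_X_pow, if_pos rfl, PowerSeries.coeff_mul] at h1
  have h2 : ∀ p ∈ Finset.HasAntidiagonal.antidiagonal m,
      PowerSeries.coeff p.1 b * PowerSeries.coeff p.2 h = 0 := by
    rintro ⟨i, j⟩ hp
    rw [Finset.HasAntidiagonal.mem_antidiagonal] at hp
    rw [hcoeff i (by omega), zero_mul]
  rw [Finset.sum_eq_zero h2] at h1
  exact one_ne_zero h1

end QCPR

end QCPRaux

open QCPR in
/-- In `A = k[[X,Y,Z]]/(Z² − XY)`, the prime `𝔭 = (x, z)` admits no principal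
reduction: there is no `a ∈ 𝔭` with `𝔭^{r+1} = a·𝔭^r` for some `r ≥ 0`. -/
theorem quadric_cone_prime_no_principal_reduction
    (k : Type*) [Field k]
    (P : MvPowerSeries (Fin 3) k)
    (hP : P = (MvPowerSeries.X 2 : MvPowerSeries (Fin 3) k) ^ 2 -
      MvPowerSeries.X 0 * MvPowerSeries.X 1)
    (𝔭 : Ideal (MvPowerSeries (Fin 3) k ⧸ Ideal.span {P}))
    (h𝔭 : 𝔭 = Ideal.span {Ideal.Quotient.mk (Ideal.span {P}) (MvPowerSeries.X 0),
      Ideal.Quotient.mk (Ideal.span {P}) (MvPowerSeries.X 2)}) :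
    ¬ ∃ a ∈ 𝔭, ∃ r : ℕ, 𝔭 ^ (r + 1) = Ideal.span {a} * 𝔭 ^ r := by
  rintro ⟨a, ha, r, hEq⟩
  -- decompose a
  rw [h𝔭, Ideal.mem_span_pair] at ha
  obtain ⟨u, v, huv⟩ := ha
  obtain ⟨f, rfl⟩ := Ideal.Quotient.mk_surjective u
  obtain ⟨g, rfl⟩ := Ideal.Quotient.mk_surjective v
  set f0 := MvPowerSeries.constantCoeff f with hf0
  set g0 := MvPowerSeries.constantCoeff g with hg0
  -- generic construction of the lifted map for a family (w, c)
  -- Family 2 first: weights (4,2,3), coefficients (1,1,1); shows g0 ≠ 0.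
  have mklift : ∀ (w : Fin 3 → ℕ) (hw : ∀ i, 1 ≤ w i) (c : Fin 3 → k)
      (hker : phiHom w hw c P = 0),
      ∃ Ψ : (MvPowerSeries (Fin 3) k ⧸ Ideal.span {P}) →+* PowerSeries k,
        ∀ x, Ψ (Ideal.Quotient.mk (Ideal.span {P}) x) = phiHom w hw c x := by
    intro w hw c hker
    refine ⟨Ideal.Quotient.lift (Ideal.span {P}) (phiHom w hw c) ?_, fun x => rfl⟩
    intro x hx
    rw [Ideal.mem_span_singleton] at hx
    obtain ⟨y, rfl⟩ := hx
    rw [map_mul, hker, zero_mul]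
  -- the generic "family" argument
  have family : ∀ (w : Fin 3 → ℕ) (hw : ∀ i, 1 ≤ w i) (c : Fin 3 → k)
      (hker : phiHom w hw c P = 0) (m : ℕ)
      (hspan : Ideal.span {phiHom w hw c (MvPowerSeries.X 0),
        phiHom w hw c (MvPowerSeries.X 2)} =
        Ideal.span {(PowerSeries.X : PowerSeries k) ^ m})
      (hvan : ∀ j ≤ m, PowerSeries.coeff j
        (phiHom w hw c f * (PowerSeries.C (c 0) * PowerSeries.X ^ (w 0)) +
         phiHom w hw c g * (PowerSeries.C (c 2) * PowerSeries.X ^ (w 2))) = 0),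
      False := by
    intro w hw c hker m hspan hvan
    obtain ⟨Ψ, hΨ⟩ := mklift w hw c hker
    have hdvd : Ψ (Ideal.Quotient.mk (Ideal.span {P}) f *
        Ideal.Quotient.mk (Ideal.span {P}) (MvPowerSeries.X 0) +
        Ideal.Quotient.mk (Ideal.span {P}) g *
        Ideal.Quotient.mk (Ideal.span {P}) (MvPowerSeries.X 2)) ∣
        (PowerSeries.X : PowerSeries k) ^ m := by
      rw [huv]
      exact key Ψ _ _ 𝔭 h𝔭 a r hEq _ (pow_ne_zero m PowerSeries.X_ne_zero) (by
        rw [hΨ, hΨ]; exact hspan)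
    rw [RingHom.map_add, RingHom.map_mul, RingHom.map_mul, hΨ, hΨ, hΨ, hΨ, phiHom_X, phiHom_X] at hdvd
    exact dvd_contra _ m hdvd hvan
  -- Family 2: weights (4,2,3), coefficients (1,1,1)
  have hw2 : ∀ i : Fin 3, 1 ≤ (![4, 2, 3] : Fin 3 → ℕ) i := by decide
  have hker2 : phiHom ![4, 2, 3] hw2 (![1, 1, 1] : Fin 3 → k) P = 0 := by
    rw [hP, map_sub, map_pow, map_mul, phiHom_X, phiHom_X, phiHom_X]
    simp only [Matrix.cons_val_zero, Matrix.cons_val_one, Matrix.head_cons,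
      Matrix.cons_val_two, Matrix.tail_cons, map_one, one_mul]
    ring
  have hg0ne : g0 ≠ 0 := by
    intro hg00
    refine family ![4, 2, 3] hw2 ![1, 1, 1] hker2 3 ?_ ?_
    · rw [phiHom_X, phiHom_X]
      simp only [Matrix.cons_val_zero, Matrix.cons_val_two, Matrix.tail_cons,
        Matrix.head_cons, map_one, one_mul]
      apply le_antisymm
      · rw [Ideal.span_le]
        rintro t ht
        simp only [Set.mem_insert_iff, Set.mem_singleton_iff] at ht
        rcases ht with rfl | rfl
        · rw [SetLike.mem_coe, Ideal.mem_span_singleton]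
          exact ⟨PowerSeries.X, by ring⟩
        · exact Ideal.subset_span rfl
      · rw [Ideal.span_le]
        rintro t rfl
        exact Ideal.subset_span (Set.mem_insert_of_mem _ rfl)
    · intro j hj
      rw [map_add, coeff_mul_C_X_pow, coeff_mul_C_X_pow]
      simp only [Matrix.cons_val_zero, Matrix.cons_val_two, Matrix.tail_cons,
        Matrix.head_cons]
      have h4 : ¬ (4 ≤ j) := by omega
      simp only [h4, ↓reduceIte, zero_add]
      by_cases h3 : 3 ≤ j
      · have hj3 : j = 3 := by omega
        subst hj3
        simp only [h3, ↓reduceIte]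
        show PowerSeries.coeff 0 (phi ![4,2,3] ![1,1,1] g) * 1 = 0
        rw [coeff_zero_phi ![4,2,3] hw2 ![1,1,1] g, ← hg0, hg00, zero_mul]
      · simp only [h3, ↓reduceIte]
  -- Family 1: weights (2,2,2), coefficients (1, d², d) with d = -f0/g0
  set d : k := -f0 / g0 with hd
  have hw1 : ∀ i : Fin 3, 1 ≤ (![2, 2, 2] : Fin 3 → ℕ) i := by decide
  have hker1 : phiHom ![2, 2, 2] hw1 (![1, d ^ 2, d] : Fin 3 → k) P = 0 := by
    rw [hP, map_sub, map_pow, map_mul, phiHom_X, phiHom_X, phiHom_X]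
    simp only [Matrix.cons_val_zero, Matrix.cons_val_one, Matrix.head_cons,
      Matrix.cons_val_two, Matrix.tail_cons, map_one, one_mul]
    rw [map_pow]
    ring
  refine family ![2, 2, 2] hw1 ![1, d ^ 2, d] hker1 2 ?_ ?_
  · rw [phiHom_X, phiHom_X]
    simp only [Matrix.cons_val_zero, Matrix.cons_val_two, Matrix.tail_cons,
      Matrix.head_cons, map_one, one_mul]
    apply le_antisymm
    · rw [Ideal.span_le]
      rintro t ht
      simp only [Set.mem_insert_iff, Set.mem_singleton_iff] at ht
      rcases ht with rfl | rfl
      · exact Ideal.subset_span rfl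
      · rw [SetLike.mem_coe, Ideal.mem_span_singleton]
        exact ⟨PowerSeries.C d, by ring⟩
    · rw [Ideal.span_le]
      rintro t rfl
      exact Ideal.subset_span (Set.mem_insert _ _)
  · intro j hj
    rw [map_add, coeff_mul_C_X_pow, coeff_mul_C_X_pow]
    simp only [Matrix.cons_val_zero, Matrix.cons_val_two, Matrix.tail_cons,
      Matrix.head_cons]
    by_cases h2 : 2 ≤ j
    · have hj2 : j = 2 := by omega
      subst hj2
      simp only [h2, ↓reduceIte]
      show PowerSeries.coeff 0 (phi ![2,2,2] ![1, d^2, d] f) * 1 +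
        PowerSeries.coeff 0 (phi ![2,2,2] ![1, d^2, d] g) * d = 0
      rw [coeff_zero_phi ![2,2,2] hw1 _ f, coeff_zero_phi ![2,2,2] hw1 _ g,
        ← hf0, ← hg0, hd]
      field_simp
      ring
    · simp only [h2, ↓reduceIte, add_zero]
end
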